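/- Let (ℓ1', ℓ2') be any ordered pair of distinct intersecting lines of the Hall affine plane A_H. Then there exists a collineation φ of A_H such that φ(ℓ1') is the line ℓ1, where ℓ1 is the vertical line x = (0,0) if ℓ1' ∈ BF, and ℓ1 is the line y = x·(0,1) if ℓ1' ∈ NBF; setting ℓ2 = φ(ℓ2'), the lines ℓ1 and ℓ2 meet at the origin O = ((0,0),(0,0)). Moreover, for any two points P, Q on ℓ1 with P, Q ≠ O, there is a collineation fixing O, mapping each of ℓ1 and ℓ2 onto itself, and mapping P to Q; and likewise for any two points P, Q on ℓ2 with P, Q ≠ O, there is a collineation fixing O, mapping each of ℓ1 and ℓ2 onto itself, and mapping P to Q. -/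

import Mathlib

open Polynomial

/-- The Hall system multiplication on `F × F`, with defining polynomial `x^2 - r*x - s`. -/
def hallMul {F : Type*} [Field F] [DecidableEq F] (r s : F) (a b : F × F) : F × F :=
  if b.2 = 0 then (a.1 * b.1, a.2 * b.1)
  else (a.1 * b.1 - a.2 * b.2⁻¹ * (b.1 ^ 2 - r * b.1 - s),
        a.1 * b.2 - a.2 * b.1 + a.2 * r)

/-- Vertical line `[c] = {(c, y)}` in the Hall affine plane. -/
def vertLine {F : Type*} (c : F × F) : Set ((F × F) × (F × F)) := {P | P.1 = c}

/-- Non-vertical line `[m, k] = {(x, x·m + k)}` in the Hall affine plane. -/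
def slopeLine {F : Type*} [Field F] [DecidableEq F] (r s : F) (m k : F × F) :
    Set ((F × F) × (F × F)) :=
  {P | P.2 = hallMul r s P.1 m + k}

/-- The lines of the Hall affine plane `A_H`. -/
def IsHallLine {F : Type*} [Field F] [DecidableEq F] (r s : F)
    (ℓ : Set ((F × F) × (F × F))) : Prop :=
  (∃ c : F × F, ℓ = vertLine c) ∨ ∃ m k : F × F, ℓ = slopeLine r s m k

/-- A collineation of the Hall affine plane: a bijection of the point set mapping
every line onto a line. -/
def IsCollineation {F : Type*} [Field F] [DecidableEq F] (r s : F)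
    (φ : (F × F) × (F × F) → (F × F) × (F × F)) : Prop :=
  Function.Bijective φ ∧ ∀ ℓ, IsHallLine r s ℓ → IsHallLine r s (φ '' ℓ)

/-- The BF lines: vertical lines and type 1 lines (slope in the basefield). -/
def BFlines {F : Type*} [Field F] [DecidableEq F] (r s : F) :
    Set (Set ((F × F) × (F × F))) :=
  {ℓ | (∃ c : F × F, ℓ = vertLine c) ∨ ∃ m k : F × F, m.2 = 0 ∧ ℓ = slopeLine r s m k}

/-- The NBF lines: type 2 lines (slope not in the basefield). -/
def NBFlines {F : Type*} [Field F] [DecidableEq F] (r s : F) :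
    Set (Set ((F × F) × (F × F))) :=
  {ℓ | ∃ m k : F × F, m.2 ≠ 0 ∧ ℓ = slopeLine r s m k}

set_option linter.unusedSectionVars false
set_option linter.unusedVariables false

namespace HallAux

variable {F : Type*} [Field F] [DecidableEq F] (r s : F)

theorem noroot_of_irr (hirr : Irreducible (X ^ 2 - C r * X - C s : F[X])) :
    ∀ t : F, t ^ 2 - r * t - s ≠ 0 := by
  intro t ht
  have hs : s = t ^ 2 - r * t := by linear_combination -ht
  have hfact : (X ^ 2 - C r * X - C s : F[X]) = (X - C t) * (X - C (r - t)) := by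
    rw [hs]; simp only [map_sub, map_mul, map_pow]; ring
  rcases hirr.isUnit_or_isUnit hfact with h | h
  · exact Polynomial.not_isUnit_X_sub_C t h
  · exact Polynomial.not_isUnit_X_sub_C (r - t) h

theorem anis (hno : ∀ t : F, t ^ 2 - r * t - s ≠ 0) (u v : F)
    (h : u ^ 2 + r * u * v - s * v ^ 2 = 0) : u = 0 ∧ v = 0 := by
  by_cases hv : v = 0
  · subst hv
    constructor
    · have : u ^ 2 = 0 := by linear_combination h
      exact pow_eq_zero_iff (n := 2) (by norm_num) |>.mp this
    · rfl
  · exfalso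
    have key : (-(u / v)) ^ 2 - r * (-(u / v)) - s = (u ^ 2 + r * u * v - s * v ^ 2) / v ^ 2 := by
      field_simp; ring
    exact hno (-(u / v)) (by rw [key, h, zero_div])

theorem hm1 {b : F × F} (hb : b.2 = 0) (a : F × F) :
    hallMul r s a b = (a.1 * b.1, a.2 * b.1) := if_pos hb

theorem hm2 {b : F × F} (hb : b.2 ≠ 0) (a : F × F) :
    hallMul r s a b = (a.1 * b.1 - a.2 * b.2⁻¹ * (b.1 ^ 2 - r * b.1 - s),
      a.1 * b.2 - a.2 * b.1 + a.2 * r) := if_neg hb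

theorem hm_zero (m : F × F) : hallMul r s 0 m = 0 := by
  by_cases hm : m.2 = 0
  · rw [hm1 r s hm]; simp
  · rw [hm2 r s hm]; simp

theorem hm_add (x y m : F × F) :
    hallMul r s (x + y) m = hallMul r s x m + hallMul r s y m := by
  by_cases hm : m.2 = 0
  · simp only [hm1 r s hm, Prod.fst_add, Prod.snd_add, Prod.mk_add_mk, Prod.mk.injEq]
    constructor <;> ring
  · simp only [hm2 r s hm, Prod.fst_add, Prod.snd_add, Prod.mk_add_mk, Prod.mk.injEq]
    constructor <;> ring

theorem hm_neg (x m : F × F) : hallMul r s (-x) m = -hallMul r s x m := by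
  by_cases hm : m.2 = 0
  · simp only [hm1 r s hm, Prod.fst_neg, Prod.snd_neg, Prod.neg_mk, Prod.mk.injEq]
    constructor <;> ring
  · simp only [hm2 r s hm, Prod.fst_neg, Prod.snd_neg, Prod.neg_mk, Prod.mk.injEq]
    constructor <;> ring

/-- scalar (basefield) slopes act as scalar multiplication -/
theorem hm_scalar (t : F) (x : F × F) : hallMul r s x (t, 0) = (t * x.1, t * x.2) := by
  rw [hm1 r s rfl]; simp [mul_comm]

/-- the quadratic relation `(x·m)·m = s x + r (x·m)` for nonscalar slopes -/
theorem hm_quad {m : F × F} (hm : m.2 ≠ 0) (x : F × F) :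
    hallMul r s (hallMul r s x m) m =
      (s * x.1 + r * (hallMul r s x m).1, s * x.2 + r * (hallMul r s x m).2) := by
  simp only [hm2 r s hm, Prod.mk.injEq]
  constructor <;> (field_simp; ring)

def lin2 (α β γ δ : F) (x : F × F) : F × F := (α * x.1 + β * x.2, γ * x.1 + δ * x.2)

theorem lin2_bij {α β γ δ : F} (he : α * δ - β * γ ≠ 0) :
    Function.Bijective (lin2 (F := F) α β γ δ) := by
  have he' : δ * α - β * γ ≠ 0 := by rwa [mul_comm δ]
  have he'' : α * δ - γ * β ≠ 0 := by rwa [mul_comm γ]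
  have he''' : δ * α - γ * β ≠ 0 := by rwa [mul_comm δ, mul_comm γ]
  rw [Function.bijective_iff_has_inverse]
  refine ⟨lin2 (δ / (α * δ - β * γ)) (-β / (α * δ - β * γ))
      (-γ / (α * δ - β * γ)) (α / (α * δ - β * γ)), ?_, ?_⟩ <;>
    · intro x
      simp only [lin2, Prod.ext_iff]
      constructor <;> (try dsimp only) <;> (try field_simp) <;> ring

theorem lin2_zero (α β γ δ : F) : lin2 α β γ δ 0 = 0 := by simp [lin2]

/-- a 2×2 matrix with trace `r`, determinant `-s` is right multiplication by the
slope given by its first column; and that slope is nonscalar. -/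
theorem slope_of_mat (hno : ∀ t : F, t ^ 2 - r * t - s ≠ 0) {b11 b12 b21 b22 : F}
    (htr : b11 + b22 = r) (hdet : b11 * b22 - b12 * b21 = -s) :
    b21 ≠ 0 ∧ ∀ x : F × F, lin2 b11 b12 b21 b22 x = hallMul r s x (b11, b21) := by
  have hb21 : b21 ≠ 0 := by
    intro h0
    apply hno b11
    have hb22 : b22 = r - b11 := by linear_combination htr
    linear_combination -hdet + b11 * hb22 - b12 * h0
  refine ⟨hb21, fun x => ?_⟩
  rw [hm2 r s (show ((b11, b21) : F × F).2 ≠ 0 from hb21)]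
  simp only [lin2, Prod.mk.injEq]
  constructor
  · have h2 : b21⁻¹ * (b11 ^ 2 - r * b11 - s) = -b12 := by
      field_simp
      linear_combination b11 * htr - hdet
    linear_combination x.2 * h2
  · linear_combination x.2 * htr

/-- conjugation of a nonscalar slope by an invertible matrix is again right
multiplication by a nonscalar slope. -/
theorem conj_slope (hno : ∀ t : F, t ^ 2 - r * t - s ≠ 0) (α β γ δ : F)
    (he : α * δ - β * γ ≠ 0) {n : F × F} (hn : n.2 ≠ 0) :
    ∃ n' : F × F, n'.2 ≠ 0 ∧ ∀ x : F × F,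
      lin2 α β γ δ (hallMul r s x n) = hallMul r s (lin2 α β γ δ x) n' := by
  set e := α * δ - β * γ with he_def
  set ψ := -(n.1 ^ 2 - r * n.1 - s) / n.2 with hψ
  set b11 := ((α * n.1 + β * n.2) * δ - (α * ψ + β * (r - n.1)) * γ) / e with h11
  set b12 := (-(α * n.1 + β * n.2) * β + (α * ψ + β * (r - n.1)) * α) / e with h12
  set b21 := ((γ * n.1 + δ * n.2) * δ - (γ * ψ + δ * (r - n.1)) * γ) / e with h21
  set b22 := (-(γ * n.1 + δ * n.2) * β + (γ * ψ + δ * (r - n.1)) * α) / e with h22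
  have htr : b11 + b22 = r := by
    rw [h11, h22, hψ]; field_simp; ring
  have hdet : b11 * b22 - b12 * b21 = -s := by
    rw [h11, h22, h12, h21, hψ]; field_simp; ring
  obtain ⟨hb21, hB⟩ := slope_of_mat r s hno htr hdet
  refine ⟨(b11, b21), hb21, fun x => ?_⟩
  rw [← hB]
  rw [hm2 r s hn]
  simp only [lin2, Prod.mk.injEq, h11, h12, h21, h22, hψ]
  constructor <;> (field_simp; ring)



/-! ### pattern lemmas for images of lines -/

theorem img_slope_slope {T : (F × F) × (F × F) → (F × F) × (F × F)} {σ : F × F → F × F}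
    (hσ : Function.Surjective σ) {n k n' k' : F × F}
    (h : ∀ x : F × F, T (x, hallMul r s x n + k) = (σ x, hallMul r s (σ x) n' + k')) :
    T '' slopeLine r s n k = slopeLine r s n' k' := by
  ext P
  constructor
  · rintro ⟨⟨x, y⟩, hy, rfl⟩
    have hy' : y = hallMul r s x n + k := hy
    rw [hy', h x]
    exact rfl
  · intro hP
    obtain ⟨x, hx⟩ := hσ P.1
    refine ⟨(x, hallMul r s x n + k), rfl, ?_⟩
    rw [h x, hx]
    have : P.2 = hallMul r s P.1 n' + k' := hP
    rw [← this]

theorem img_slope_vert {T : (F × F) × (F × F) → (F × F) × (F × F)} {σ : F × F → F × F}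
    (hσ : Function.Surjective σ) {n k c : F × F}
    (h : ∀ x : F × F, T (x, hallMul r s x n + k) = (c, σ x)) :
    T '' slopeLine r s n k = vertLine c := by
  ext P
  constructor
  · rintro ⟨⟨x, y⟩, hy, rfl⟩
    have hy' : y = hallMul r s x n + k := hy
    rw [hy', h x]
    exact rfl
  · intro hP
    obtain ⟨x, hx⟩ := hσ P.2
    refine ⟨(x, hallMul r s x n + k), rfl, ?_⟩
    rw [h x, hx]
    have : P.1 = c := hP
    rw [← this]

theorem img_vert_slope {T : (F × F) × (F × F) → (F × F) × (F × F)} {σ : F × F → F × F}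
    (hσ : Function.Surjective σ) {c n' k' : F × F}
    (h : ∀ y : F × F, T (c, y) = (σ y, hallMul r s (σ y) n' + k')) :
    T '' vertLine c = slopeLine r s n' k' := by
  ext P
  constructor
  · rintro ⟨⟨x, y⟩, hy, rfl⟩
    have hy' : x = c := hy
    rw [hy', h y]
    exact rfl
  · intro hP
    obtain ⟨y, hy⟩ := hσ P.1
    refine ⟨(c, y), rfl, ?_⟩
    rw [h y, hy]
    have : P.2 = hallMul r s P.1 n' + k' := hP
    rw [← this]

theorem img_vert_vert {T : (F × F) × (F × F) → (F × F) × (F × F)} {σ : F × F → F × F}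
    (hσ : Function.Surjective σ) {c c' : F × F}
    (h : ∀ y : F × F, T (c, y) = (c', σ y)) :
    T '' vertLine c = vertLine c' := by
  ext P
  constructor
  · rintro ⟨⟨x, y⟩, hy, rfl⟩
    have hy' : x = c := hy
    rw [hy', h y]
    exact rfl
  · intro hP
    obtain ⟨y, hy⟩ := hσ P.2
    refine ⟨(c, y), rfl, ?_⟩
    rw [h y, hy]
    have : P.1 = c' := hP
    rw [← this]

/-! ### translations -/

def tr (v : (F × F) × (F × F)) (P : (F × F) × (F × F)) : (F × F) × (F × F) :=
  (P.1 + v.1, P.2 + v.2)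

theorem tr_bij (v : (F × F) × (F × F)) : Function.Bijective (tr (F := F) v) := by
  rw [Function.bijective_iff_has_inverse]
  exact ⟨tr (-v.1, -v.2), fun P => by simp [tr], fun P => by simp [tr]⟩

theorem tr_vert (v : (F × F) × (F × F)) (c : F × F) :
    tr v '' vertLine c = vertLine (c + v.1) := by
  apply img_vert_vert (σ := fun y => y + v.2) (fun y => ⟨y - v.2, by ring⟩)
  intro y; rfl

theorem tr_slope (v : (F × F) × (F × F)) (m k : F × F) :
    tr v '' slopeLine r s m k = slopeLine r s m (k + v.2 - hallMul r s v.1 m) := by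
  apply img_slope_slope r s (σ := fun x => x + v.1) (fun x => ⟨x - v.1, by ring⟩)
  intro x
  simp only [tr, Prod.mk.injEq, true_and]
  rw [hm_add]
  abel

theorem tr_coll (v : (F × F) × (F × F)) : IsCollineation r s (tr v) := by
  refine ⟨tr_bij v, fun ℓ hℓ => ?_⟩
  rcases hℓ with ⟨c, rfl⟩ | ⟨m, k, rfl⟩
  · exact Or.inl ⟨c + v.1, tr_vert v c⟩
  · exact Or.inr ⟨m, k + v.2 - hallMul r s v.1 m, tr_slope r s v m k⟩

/-! ### the diagonal family -/

def Am (a b : F) (n x : F × F) : F × F :=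
  (a * x.1 + b * (hallMul r s x n).1, a * x.2 + b * (hallMul r s x n).2)

theorem Am_eq_lin2 {n : F × F} (hn : n.2 ≠ 0) (a b : F) :
    Am r s a b n = lin2 (a + b * n.1) (b * (-(n.1 ^ 2 - r * n.1 - s) / n.2))
      (b * n.2) (a + b * (r - n.1)) := by
  funext x
  simp only [Am, lin2, hm2 r s hn, Prod.mk.injEq]
  constructor
  · field_simp; ring
  · ring

theorem Am_det {n : F × F} (hn : n.2 ≠ 0) (a b : F) :
    (a + b * n.1) * (a + b * (r - n.1)) - b * (-(n.1 ^ 2 - r * n.1 - s) / n.2) * (b * n.2)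
      = a ^ 2 + a * b * r - b ^ 2 * s := by
  field_simp; ring

theorem Am_delta_ne (hno : ∀ t : F, t ^ 2 - r * t - s ≠ 0) {a b : F}
    (hab : ¬(a = 0 ∧ b = 0)) : a ^ 2 + a * b * r - b ^ 2 * s ≠ 0 := by
  intro h
  exact hab (anis r s hno a b (by linear_combination h))

theorem Am_bij (hno : ∀ t : F, t ^ 2 - r * t - s ≠ 0) {n : F × F} (hn : n.2 ≠ 0)
    {a b : F} (hab : ¬(a = 0 ∧ b = 0)) : Function.Bijective (Am r s a b n) := by
  rw [Am_eq_lin2 r s hn]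
  apply lin2_bij
  rw [Am_det r s hn]
  exact Am_delta_ne r s hno hab

theorem Am_zero (a b : F) (n : F × F) : Am r s a b n 0 = 0 := by
  simp [Am, hm_zero]

/-- `Am` commutes with right multiplication by its own slope. -/
theorem Am_comm_self (a b : F) (n x : F × F) :
    Am r s a b n (hallMul r s x n) = hallMul r s (Am r s a b n x) n := by
  by_cases hn : n.2 = 0
  · simp only [Am, hm1 r s hn, Prod.mk.injEq]
    constructor <;> ring
  · simp only [Am, hm2 r s hn, Prod.mk.injEq]
    constructor <;> (field_simp; ring)

/-- `Am` commutes with right multiplication by scalar slopes. -/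
theorem Am_comm_scalar (a b : F) {m : F × F} (hm : m.2 = 0) (n x : F × F) :
    Am r s a b n (hallMul r s x m) = hallMul r s (Am r s a b n x) m := by
  by_cases hn : n.2 = 0
  · simp only [Am, hm1 r s hm, hm1 r s hn, Prod.mk.injEq]
    constructor <;> ring
  · simp only [Am, hm1 r s hm, hm2 r s hn, Prod.mk.injEq]
    constructor
    · field_simp
    · ring

/-- transitivity: `Am` can move any nonzero vector to any nonzero vector. -/
theorem Am_solve (hno : ∀ t : F, t ^ 2 - r * t - s ≠ 0) {n : F × F} (hn : n.2 ≠ 0)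
    {p : F × F} (hp : p ≠ 0) (q : F × F) : ∃ a b : F, Am r s a b n p = q := by
  have hDp : (p.1 * n.2 - p.2 * n.1) ^ 2 + r * (p.1 * n.2 - p.2 * n.1) * p.2
      - s * p.2 ^ 2 ≠ 0 := by
    intro h0
    obtain ⟨h2, h3⟩ := anis r s hno _ _ h0
    apply hp
    have hp1 : p.1 = 0 := by
      rw [h3] at h2
      simp only [zero_mul, mul_zero, sub_zero] at h2
      rcases mul_eq_zero.mp h2 with h | h
      · exact h
      · exact absurd h hn
    exact Prod.ext hp1 h3
  have hDp' : (p.1 * n.2 - p.2 * n.1) * (p.1 * n.2 - p.2 * n.1 + p.2 * r) - p.2 ^ 2 * s ≠ 0 := by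
    rwa [show (p.1 * n.2 - p.2 * n.1) * (p.1 * n.2 - p.2 * n.1 + p.2 * r) - p.2 ^ 2 * s
      = (p.1 * n.2 - p.2 * n.1) ^ 2 + r * (p.1 * n.2 - p.2 * n.1) * p.2 - s * p.2 ^ 2 by ring]
  refine ⟨(q.1 * (p.1 * n.2 - p.2 * n.1 + p.2 * r) * n.2
        - q.2 * (p.1 * n.1 * n.2 - p.2 * (n.1 ^ 2 - r * n.1 - s)))
      / ((p.1 * n.2 - p.2 * n.1) ^ 2 + r * (p.1 * n.2 - p.2 * n.1) * p.2 - s * p.2 ^ 2),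
    (p.1 * q.2 - p.2 * q.1) * n.2
      / ((p.1 * n.2 - p.2 * n.1) ^ 2 + r * (p.1 * n.2 - p.2 * n.1) * p.2 - s * p.2 ^ 2), ?_⟩
  unfold Am
  rw [hm2 r s hn, Prod.ext_iff]
  constructor <;> (try dsimp only) <;> (try field_simp) <;> ring



/-! ### the diagonal collineations -/

def Ps (a b : F) (n : F × F) (P : (F × F) × (F × F)) : (F × F) × (F × F) :=
  (Am r s a b n P.1, Am r s a b n P.2)

theorem Am_add (a b : F) (n x y : F × F) :
    Am r s a b n (x + y) = Am r s a b n x + Am r s a b n y := by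
  simp only [Am, hm_add r s x y n, Prod.fst_add, Prod.snd_add, Prod.mk_add_mk, Prod.mk.injEq]
  constructor <;> ring

theorem Ps_bij (hno : ∀ t : F, t ^ 2 - r * t - s ≠ 0) {n : F × F} (hn : n.2 ≠ 0)
    {a b : F} (hab : ¬(a = 0 ∧ b = 0)) : Function.Bijective (Ps r s a b n) := by
  obtain ⟨g, hg1, hg2⟩ := Function.bijective_iff_has_inverse.mp (Am_bij r s hno hn hab)
  rw [Function.bijective_iff_has_inverse]
  exact ⟨fun P => (g P.1, g P.2), fun P => by simp [Ps, hg1 P.1, hg1 P.2],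
    fun P => by simp [Ps, hg2 P.1, hg2 P.2]⟩

theorem Ps_origin (a b : F) (n : F × F) : Ps r s a b n (0, 0) = (0, 0) := by
  simp [Ps, Am_zero]

theorem Ps_vert (hno : ∀ t : F, t ^ 2 - r * t - s ≠ 0) {n : F × F} (hn : n.2 ≠ 0)
    {a b : F} (hab : ¬(a = 0 ∧ b = 0)) (c : F × F) :
    Ps r s a b n '' vertLine c = vertLine (Am r s a b n c) := by
  exact img_vert_vert (σ := Am r s a b n) (Am_bij r s hno hn hab).surjective fun y => rfl

theorem Ps_slope_self (hno : ∀ t : F, t ^ 2 - r * t - s ≠ 0) {n : F × F} (hn : n.2 ≠ 0)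
    {a b : F} (hab : ¬(a = 0 ∧ b = 0)) (k : F × F) :
    Ps r s a b n '' slopeLine r s n k = slopeLine r s n (Am r s a b n k) := by
  apply img_slope_slope r s (σ := Am r s a b n) (Am_bij r s hno hn hab).surjective
  intro x
  show (_, Am r s a b n _) = _
  rw [Am_add, Am_comm_self]

theorem Ps_slope_scalar (hno : ∀ t : F, t ^ 2 - r * t - s ≠ 0) {n : F × F} (hn : n.2 ≠ 0)
    {a b : F} (hab : ¬(a = 0 ∧ b = 0)) {m : F × F} (hm : m.2 = 0) (k : F × F) :
    Ps r s a b n '' slopeLine r s m k = slopeLine r s m (Am r s a b n k) := by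
  apply img_slope_slope r s (σ := Am r s a b n) (Am_bij r s hno hn hab).surjective
  intro x
  show (_, Am r s a b n _) = _
  rw [Am_add, Am_comm_scalar r s a b hm]

theorem Ps_slope_other (hno : ∀ t : F, t ^ 2 - r * t - s ≠ 0) {n : F × F} (hn : n.2 ≠ 0)
    {a b : F} (hab : ¬(a = 0 ∧ b = 0)) {m : F × F} (hm : m.2 ≠ 0) (k : F × F) :
    ∃ m' : F × F, m'.2 ≠ 0 ∧
      Ps r s a b n '' slopeLine r s m k = slopeLine r s m' (Am r s a b n k) := by
  have hdet : (a + b * n.1) * (a + b * (r - n.1))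
      - b * (-(n.1 ^ 2 - r * n.1 - s) / n.2) * (b * n.2) ≠ 0 := by
    rw [Am_det r s hn]
    exact Am_delta_ne r s hno hab
  obtain ⟨m', hm', hconj⟩ := conj_slope r s hno (a + b * n.1)
    (b * (-(n.1 ^ 2 - r * n.1 - s) / n.2)) (b * n.2) (a + b * (r - n.1)) hdet hm
  refine ⟨m', hm', ?_⟩
  apply img_slope_slope r s (σ := Am r s a b n) (Am_bij r s hno hn hab).surjective
  intro x
  show (_, Am r s a b n _) = _
  rw [Am_add]
  have hAx : ∀ y : F × F, Am r s a b n y = lin2 (a + b * n.1)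
      (b * (-(n.1 ^ 2 - r * n.1 - s) / n.2)) (b * n.2) (a + b * (r - n.1)) y := by
    intro y; rw [Am_eq_lin2 r s hn]
  rw [hAx (hallMul r s x m), hconj x, hAx x]

theorem Ps_coll (hno : ∀ t : F, t ^ 2 - r * t - s ≠ 0) {n : F × F} (hn : n.2 ≠ 0)
    {a b : F} (hab : ¬(a = 0 ∧ b = 0)) : IsCollineation r s (Ps r s a b n) := by
  refine ⟨Ps_bij r s hno hn hab, fun ℓ hℓ => ?_⟩
  rcases hℓ with ⟨c, rfl⟩ | ⟨m, k, rfl⟩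
  · exact Or.inl ⟨_, Ps_vert r s hno hn hab c⟩
  · by_cases hm : m.2 = 0
    · exact Or.inr ⟨m, _, Ps_slope_scalar r s hno hn hab hm k⟩
    · obtain ⟨m', _, him⟩ := Ps_slope_other r s hno hn hab hm k
      exact Or.inr ⟨m', _, him⟩

/-! ### the `E`-scalar collineations -/

def gm (a b : F) (P : (F × F) × (F × F)) : (F × F) × (F × F) :=
  ((a * P.1.1 + b * P.2.1, a * P.1.2 + b * P.2.2),
   (b * s * P.1.1 + (a + b * r) * P.2.1, b * s * P.1.2 + (a + b * r) * P.2.2))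

theorem gm_bij (hno : ∀ t : F, t ^ 2 - r * t - s ≠ 0) {a b : F}
    (hab : ¬(a = 0 ∧ b = 0)) : Function.Bijective (gm r s a b) := by
  have hδ := Am_delta_ne r s hno hab
  have hδ' : a * (a + b * r) - b ^ 2 * s ≠ 0 := by
    rwa [show a * (a + b * r) - b ^ 2 * s = a ^ 2 + a * b * r - b ^ 2 * s by ring]
  rw [Function.bijective_iff_has_inverse]
  refine ⟨gm r s ((a + b * r) / (a ^ 2 + a * b * r - b ^ 2 * s))
      (-b / (a ^ 2 + a * b * r - b ^ 2 * s)), ?_, ?_⟩ <;>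
    · intro P
      refine Prod.ext (Prod.ext ?_ ?_) (Prod.ext ?_ ?_) <;>
        (dsimp only [gm]; field_simp; ring)

theorem gm_origin (a b : F) : gm r s a b (0, 0) = (0, 0) := by
  simp [gm]

/-- `gm` fixes every line of type 2 through the origin (pointwise action by `Am`). -/
theorem gm_pt (a b : F) {n : F × F} (hn : n.2 ≠ 0) (x : F × F) :
    gm r s a b (x, hallMul r s x n) = (Am r s a b n x, hallMul r s (Am r s a b n x) n) := by
  refine Prod.ext rfl ?_
  show (_, _) = _
  rw [hm2 r s hn]
  simp only [Am, hm2 r s hn, Prod.mk.injEq]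
  constructor <;> (field_simp; ring)

theorem gm_slope2 (a b : F) {m : F × F} (hm : m.2 ≠ 0) (k : F × F)
    (hno : ∀ t : F, t ^ 2 - r * t - s ≠ 0) (hab : ¬(a = 0 ∧ b = 0)) :
    gm r s a b '' slopeLine r s m k =
      slopeLine r s m ((a + b * r) * k.1 - b * (hallMul r s k m).1,
        (a + b * r) * k.2 - b * (hallMul r s k m).2) := by
  have hsurj : Function.Surjective
      (fun x => Am r s a b m x + (b * k.1, b * k.2) : F × F → F × F) := by
    intro u
    obtain ⟨x, hx⟩ := (Am_bij r s hno hm hab).surjective (u - (b * k.1, b * k.2))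
    exact ⟨x, by dsimp only; rw [hx]; abel⟩
  apply img_slope_slope r s (σ := fun x => Am r s a b m x + (b * k.1, b * k.2)) hsurj
  intro x
  refine Prod.ext (Prod.ext ?_ ?_) (Prod.ext ?_ ?_) <;>
    · simp only [gm, Am, hm2 r s hm, Prod.fst_add, Prod.snd_add, Prod.mk_add_mk]
      try dsimp only
      try field_simp
      try ring

theorem gm_slope2_zero (a b : F) {m : F × F} (hm : m.2 ≠ 0)
    (hno : ∀ t : F, t ^ 2 - r * t - s ≠ 0) (hab : ¬(a = 0 ∧ b = 0)) :
    gm r s a b '' slopeLine r s m 0 = slopeLine r s m 0 := by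
  have := gm_slope2 r s a b hm 0 hno hab
  simpa [hm_zero, Prod.mk_zero_zero] using this

theorem gm_vert (a b : F) (hno : ∀ t : F, t ^ 2 - r * t - s ≠ 0)
    (hab : ¬(a = 0 ∧ b = 0)) (c : F × F) :
    IsHallLine r s (gm r s a b '' vertLine c) := by
  by_cases hb : b = 0
  · have ha : a ≠ 0 := fun h => hab ⟨h, hb⟩
    left
    refine ⟨(a * c.1, a * c.2), ?_⟩
    apply img_vert_vert (σ := fun y => (a * y.1, a * y.2))
      (fun u => ⟨(u.1 / a, u.2 / a), by field_simp⟩)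
    intro y
    refine Prod.ext (Prod.ext ?_ ?_) (Prod.ext ?_ ?_) <;> (simp only [gm]; rw [hb]; try ring)
  · right
    refine ⟨((a + b * r) / b, 0), (-(a ^ 2 + a * b * r - b ^ 2 * s) / b * c.1,
      -(a ^ 2 + a * b * r - b ^ 2 * s) / b * c.2), ?_⟩
    apply img_vert_slope r s (σ := fun y => (a * c.1 + b * y.1, a * c.2 + b * y.2))
      (fun u => ⟨((u.1 - a * c.1) / b, (u.2 - a * c.2) / b), by field_simp; simp⟩)
    intro y
    rw [hm_scalar]
    refine Prod.ext (Prod.ext ?_ ?_) (Prod.ext ?_ ?_) <;>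
      (simp only [gm, Prod.fst_add, Prod.snd_add]; try field_simp; try ring)

theorem gm_slope1 (a b : F) (hno : ∀ t : F, t ^ 2 - r * t - s ≠ 0)
    (hab : ¬(a = 0 ∧ b = 0)) {m : F × F} (hm : m.2 = 0) (k : F × F) :
    IsHallLine r s (gm r s a b '' slopeLine r s m k) := by
  by_cases ha : a + b * m.1 = 0
  · -- image is a vertical line
    have hb : b ≠ 0 := by
      intro hb0
      rw [hb0] at ha
      exact hab ⟨by linear_combination ha, hb0⟩
    have hc0 : b * s + (a + b * r) * m.1 ≠ 0 := by
      intro h0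
      apply hno m.1
      have hb1 : b * (s + r * m.1 - m.1 ^ 2) = 0 := by linear_combination h0 - m.1 * ha
      rcases mul_eq_zero.mp hb1 with h | h
      · exact absurd h hb
      · linear_combination -h
    left
    refine ⟨(b * k.1, b * k.2), ?_⟩
    apply img_slope_vert r s (σ := fun x =>
      ((b * s + (a + b * r) * m.1) * x.1 + (a + b * r) * k.1,
       (b * s + (a + b * r) * m.1) * x.2 + (a + b * r) * k.2))
      (fun u => ⟨((u.1 - (a + b * r) * k.1) / (b * s + (a + b * r) * m.1),
        (u.2 - (a + b * r) * k.2) / (b * s + (a + b * r) * m.1)), by dsimp only; field_simp; simp⟩)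
    intro x
    refine Prod.ext (Prod.ext ?_ ?_) (Prod.ext ?_ ?_) <;>
      simp only [gm, hm1 r s hm, Prod.fst_add, Prod.snd_add, Prod.mk_add_mk]
    · linear_combination x.1 * ha
    · linear_combination x.2 * ha
    · try dsimp only
      try ring
    · try dsimp only
      try ring
  · -- image is a type 1 line
    right
    refine ⟨((b * s + (a + b * r) * m.1) / (a + b * m.1), 0),
      ((a ^ 2 + a * b * r - b ^ 2 * s) / (a + b * m.1) * k.1,
       (a ^ 2 + a * b * r - b ^ 2 * s) / (a + b * m.1) * k.2), ?_⟩
    apply img_slope_slope r s (σ := fun x =>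
      ((a + b * m.1) * x.1 + b * k.1, (a + b * m.1) * x.2 + b * k.2))
      (fun u => ⟨((u.1 - b * k.1) / (a + b * m.1), (u.2 - b * k.2) / (a + b * m.1)),
        by dsimp only; field_simp; simp⟩)
    intro x
    refine Prod.ext (Prod.ext ?_ ?_) (Prod.ext ?_ ?_) <;>
      · simp only [gm, hm1 r s hm, hm_scalar, Prod.fst_add, Prod.snd_add, Prod.mk_add_mk]
        try dsimp only
        try field_simp
        try ring

theorem gm_coll (hno : ∀ t : F, t ^ 2 - r * t - s ≠ 0) {a b : F}
    (hab : ¬(a = 0 ∧ b = 0)) : IsCollineation r s (gm r s a b) := by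
  refine ⟨gm_bij r s hno hab, fun ℓ hℓ => ?_⟩
  rcases hℓ with ⟨c, rfl⟩ | ⟨m, k, rfl⟩
  · exact gm_vert r s a b hno hab c
  · by_cases hm : m.2 = 0
    · exact gm_slope1 r s a b hno hab hm k
    · exact Or.inr ⟨m, _, gm_slope2 r s a b hm k hno hab⟩

/-! ### distinguishing lines -/

theorem vert_ne_slope (c m k : F × F) : vertLine c ≠ slopeLine r s m k := by
  intro h
  have h1 : (c, hallMul r s c m + k + ((1 : F), (0 : F))) ∈ vertLine c := rfl
  rw [h] at h1
  have h2 : hallMul r s c m + k + ((1 : F), (0 : F)) = hallMul r s c m + k := h1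
  have h3 : ((1 : F), (0 : F)) = (0 : F × F) := by
    have := add_eq_left.mp h2
    exact this
  exact one_ne_zero (congrArg Prod.fst h3)

theorem slope1_ne_slope2 {m m' : F × F} (hm : m.2 = 0) (hm' : m'.2 ≠ 0) (k k' : F × F) :
    slopeLine r s m k ≠ slopeLine r s m' k' := by
  intro h
  have h0 : ((0 : F × F), hallMul r s 0 m + k) ∈ slopeLine r s m k := rfl
  rw [h] at h0
  have hk : hallMul r s 0 m + k = hallMul r s 0 m' + k' := h0
  rw [hm_zero, hm_zero, zero_add, zero_add] at hk
  have h1 : ((((1 : F), (0 : F)) : F × F), hallMul r s ((1 : F), (0 : F)) m + k)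
      ∈ slopeLine r s m k := rfl
  rw [h] at h1
  have hm1' : hallMul r s ((1 : F), (0 : F)) m + k
      = hallMul r s ((1 : F), (0 : F)) m' + k' := h1
  rw [hk] at hm1'
  have h2 : hallMul r s ((1 : F), (0 : F)) m = hallMul r s ((1 : F), (0 : F)) m' :=
    add_right_cancel hm1'
  rw [hm1 r s hm, hm2 r s hm'] at h2
  have := congrArg Prod.snd h2
  simp only at this
  apply hm'
  linear_combination -this

/-- a Hall line through the origin is `vertLine 0` or some `slopeLine m 0`. -/
theorem origin_line {ℓ : Set ((F × F) × (F × F))} (hℓ : IsHallLine r s ℓ)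
    (h0 : ((0 : F × F), (0 : F × F)) ∈ ℓ) :
    ℓ = vertLine 0 ∨ ∃ m : F × F, ℓ = slopeLine r s m 0 := by
  rcases hℓ with ⟨c, rfl⟩ | ⟨m, k, rfl⟩
  · left
    have : (0 : F × F) = c := h0
    rw [← this]
  · right
    refine ⟨m, ?_⟩
    have : (0 : F × F) = hallMul r s 0 m + k := h0
    rw [hm_zero, zero_add] at this
    rw [← this]


/-! ### general diagonal (matrix) collineations -/

def PsM (α β γ δ : F) (P : (F × F) × (F × F)) : (F × F) × (F × F) :=
  (lin2 α β γ δ P.1, lin2 α β γ δ P.2)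

theorem lin2_add (α β γ δ : F) (x y : F × F) :
    lin2 α β γ δ (x + y) = lin2 α β γ δ x + lin2 α β γ δ y := by
  simp only [lin2, Prod.fst_add, Prod.snd_add, Prod.mk_add_mk, Prod.mk.injEq]
  constructor <;> ring

theorem lin2_comm_scalar (α β γ δ : F) {m : F × F} (hm : m.2 = 0) (x : F × F) :
    lin2 α β γ δ (hallMul r s x m) = hallMul r s (lin2 α β γ δ x) m := by
  simp only [lin2, hm1 r s hm, Prod.mk.injEq]
  constructor <;> ring

theorem PsM_bij {α β γ δ : F} (he : α * δ - β * γ ≠ 0) :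
    Function.Bijective (PsM (F := F) α β γ δ) := by
  obtain ⟨g, hg1, hg2⟩ := Function.bijective_iff_has_inverse.mp (lin2_bij he)
  rw [Function.bijective_iff_has_inverse]
  exact ⟨fun P => (g P.1, g P.2), fun P => by simp [PsM, hg1 P.1, hg1 P.2],
    fun P => by simp [PsM, hg2 P.1, hg2 P.2]⟩

theorem PsM_origin (α β γ δ : F) : PsM (F := F) α β γ δ ((0, 0), (0, 0)) = ((0, 0), (0, 0)) := by
  simp [PsM, lin2]

theorem PsM_coll (hno : ∀ t : F, t ^ 2 - r * t - s ≠ 0) {α β γ δ : F}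
    (he : α * δ - β * γ ≠ 0) : IsCollineation r s (PsM α β γ δ) := by
  refine ⟨PsM_bij he, fun ℓ hℓ => ?_⟩
  rcases hℓ with ⟨c, rfl⟩ | ⟨m, k, rfl⟩
  · left
    refine ⟨lin2 α β γ δ c, ?_⟩
    exact img_vert_vert (σ := lin2 α β γ δ) (lin2_bij he).surjective fun y => rfl
  · by_cases hm : m.2 = 0
    · right
      refine ⟨m, lin2 α β γ δ k, ?_⟩
      apply img_slope_slope r s (σ := lin2 α β γ δ) (lin2_bij he).surjective
      intro x
      show (_, lin2 α β γ δ _) = _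
      rw [lin2_add, lin2_comm_scalar r s α β γ δ hm]
    · obtain ⟨m', hm', hconj⟩ := conj_slope r s hno α β γ δ he hm
      right
      refine ⟨m', lin2 α β γ δ k, ?_⟩
      apply img_slope_slope r s (σ := lin2 α β γ δ) (lin2_bij he).surjective
      intro x
      show (_, lin2 α β γ δ _) = _
      rw [lin2_add, hconj x]

/-- the normalizing matrix for a type-2 slope: determinant condition. -/
theorem Pm_det {m : F × F} (hm : m.2 ≠ 0) : (1 : F) * m.2⁻¹ - -(m.1 / m.2) * 0 ≠ 0 := by
  simpa using inv_ne_zero hm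

/-- the normalizing matrix conjugates slope `m` to slope `(0,1)`. -/
theorem Pm_identity {m : F × F} (hm : m.2 ≠ 0) (x : F × F) :
    lin2 1 (-(m.1 / m.2)) 0 m.2⁻¹ (hallMul r s x m)
      = hallMul r s (lin2 1 (-(m.1 / m.2)) 0 m.2⁻¹ x) ((0 : F), (1 : F)) := by
  rw [hm2 r s hm, hm2 r s (show ((0 : F), (1 : F)).2 ≠ 0 from one_ne_zero)]
  simp only [lin2, Prod.mk.injEq]
  constructor <;> (field_simp; ring)

theorem PsM_norm (hno : ∀ t : F, t ^ 2 - r * t - s ≠ 0) {m : F × F} (hm : m.2 ≠ 0) :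
    PsM 1 (-(m.1 / m.2)) 0 m.2⁻¹ '' slopeLine r s m 0
      = slopeLine r s ((0 : F), (1 : F)) 0 := by
  apply img_slope_slope r s (σ := lin2 1 (-(m.1 / m.2)) 0 m.2⁻¹)
    (lin2_bij (Pm_det hm)).surjective
  intro x
  show (_, lin2 1 (-(m.1 / m.2)) 0 m.2⁻¹ _) = _
  rw [lin2_add, Pm_identity r s hm]
  show (_, _ + lin2 1 (-(m.1 / m.2)) 0 m.2⁻¹ 0) = _
  rw [lin2_zero]

/-- `gm (-t) 1` sends the type-1 line of slope `t` through the origin to the vertical axis. -/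
theorem gm_kill (hno : ∀ t : F, t ^ 2 - r * t - s ≠ 0) {m : F × F} (hm : m.2 = 0) :
    gm r s (-m.1) 1 '' slopeLine r s m 0 = vertLine (0 : F × F) := by
  have hc0 : s + r * m.1 - m.1 ^ 2 ≠ 0 := fun h => hno m.1 (by linear_combination -h)
  apply img_slope_vert r s (σ := fun x =>
    ((s + r * m.1 - m.1 ^ 2) * x.1, (s + r * m.1 - m.1 ^ 2) * x.2))
    (fun u => ⟨(u.1 / (s + r * m.1 - m.1 ^ 2), u.2 / (s + r * m.1 - m.1 ^ 2)),
      by dsimp only; field_simp⟩)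
  intro x
  refine Prod.ext (Prod.ext ?_ ?_) (Prod.ext ?_ ?_) <;>
    simp only [gm, hm1 r s hm, Prod.fst_add, Prod.snd_add, Prod.mk_add_mk,
      Prod.fst_zero, Prod.snd_zero] <;> ring

/-! ### translations to the origin -/

theorem tr_origin (p0 : (F × F) × (F × F)) :
    tr (-p0.1, -p0.2) p0 = ((0, 0), (0, 0)) := by
  simp [tr, Prod.ext_iff]

theorem tr_vert_zero {p0 : (F × F) × (F × F)} {c : F × F} (hp : p0 ∈ vertLine c) :
    tr (-p0.1, -p0.2) '' vertLine c = vertLine (0 : F × F) := by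
  rw [tr_vert]
  have hc : p0.1 = c := hp
  rw [← hc, add_neg_cancel]

theorem tr_slope_zero {p0 : (F × F) × (F × F)} {m k : F × F}
    (hp : p0 ∈ slopeLine r s m k) :
    tr (-p0.1, -p0.2) '' slopeLine r s m k = slopeLine r s m 0 := by
  rw [tr_slope]
  have hk : p0.2 = hallMul r s p0.1 m + k := hp
  have h0 : k + ((-p0.1, -p0.2) : (F × F) × (F × F)).2
      - hallMul r s ((-p0.1, -p0.2) : (F × F) × (F × F)).1 m = 0 := by
    show k + -p0.2 - hallMul r s (-p0.1) m = 0
    rw [hm_neg, hk]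
    abel
  rw [h0]


/-! ### fixing lines through the origin -/

theorem zero_pair : ((0, 0) : F × F) = (0 : F × F) := rfl

theorem Ps_fix_vert0 (hno : ∀ t : F, t ^ 2 - r * t - s ≠ 0) {n : F × F} (hn : n.2 ≠ 0)
    {a b : F} (hab : ¬(a = 0 ∧ b = 0)) :
    Ps r s a b n '' vertLine (0 : F × F) = vertLine (0 : F × F) := by
  have := Ps_vert r s hno hn hab 0
  rwa [Am_zero] at this

theorem Ps_fix_slope_self (hno : ∀ t : F, t ^ 2 - r * t - s ≠ 0) {n : F × F} (hn : n.2 ≠ 0)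
    {a b : F} (hab : ¬(a = 0 ∧ b = 0)) :
    Ps r s a b n '' slopeLine r s n 0 = slopeLine r s n 0 := by
  have := Ps_slope_self r s hno hn hab 0
  rwa [Am_zero] at this

theorem Ps_fix_slope_scalar (hno : ∀ t : F, t ^ 2 - r * t - s ≠ 0) {n : F × F} (hn : n.2 ≠ 0)
    {a b : F} (hab : ¬(a = 0 ∧ b = 0)) {m : F × F} (hm : m.2 = 0) :
    Ps r s a b n '' slopeLine r s m 0 = slopeLine r s m 0 := by
  have := Ps_slope_scalar r s hno hn hab hm 0
  rwa [Am_zero] at this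

/-! ### extracting coordinates of points on origin lines -/

theorem vert_pt {P : (F × F) × (F × F)} (hP : P ∈ vertLine (0 : F × F))
    (hPO : P ≠ ((0, 0), (0, 0))) : P.1 = 0 ∧ P.2 ≠ 0 := by
  have h1 : P.1 = 0 := hP
  refine ⟨h1, fun h2 => hPO ?_⟩
  rw [← Prod.mk.eta (p := P), h1, h2]
  rfl

theorem slope_pt {m : F × F} {P : (F × F) × (F × F)} (hP : P ∈ slopeLine r s m 0)
    (hPO : P ≠ ((0, 0), (0, 0))) : P.2 = hallMul r s P.1 m ∧ P.1 ≠ 0 := by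
  have h1 : P.2 = hallMul r s P.1 m + 0 := hP
  rw [add_zero] at h1
  refine ⟨h1, fun h2 => hPO ?_⟩
  rw [← Prod.mk.eta (p := P), h1, h2, hm_zero]
  rfl

theorem Am_zero_coeffs (n x : F × F) : Am r s 0 0 n x = 0 := by simp [Am]

/-! ### moving points -/

theorem diag_move_vert (hno : ∀ t : F, t ^ 2 - r * t - s ≠ 0) {n : F × F} (hn : n.2 ≠ 0)
    {P Q : (F × F) × (F × F)} (hP : P ∈ vertLine (0 : F × F)) (hQ : Q ∈ vertLine (0 : F × F))
    (hPO : P ≠ ((0, 0), (0, 0))) (hQO : Q ≠ ((0, 0), (0, 0))) :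
    ∃ a b : F, ¬(a = 0 ∧ b = 0) ∧ Ps r s a b n P = Q := by
  obtain ⟨hP1, hP2⟩ := vert_pt hP hPO
  obtain ⟨hQ1, hQ2⟩ := vert_pt hQ hQO
  obtain ⟨a, b, hab2⟩ := Am_solve r s hno hn hP2 Q.2
  refine ⟨a, b, fun h0 => ?_, ?_⟩
  · apply hQ2
    rw [← hab2, h0.1, h0.2, Am_zero_coeffs]
  · show (Am r s a b n P.1, Am r s a b n P.2) = Q
    rw [hP1, Am_zero, hab2, ← hQ1, Prod.mk.eta]

theorem diag_move_slope (hno : ∀ t : F, t ^ 2 - r * t - s ≠ 0) {n : F × F} (hn : n.2 ≠ 0)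
    {m : F × F} (hcomm : ∀ a b (x : F × F),
      Am r s a b n (hallMul r s x m) = hallMul r s (Am r s a b n x) m)
    {P Q : (F × F) × (F × F)} (hP : P ∈ slopeLine r s m 0) (hQ : Q ∈ slopeLine r s m 0)
    (hPO : P ≠ ((0, 0), (0, 0))) (hQO : Q ≠ ((0, 0), (0, 0))) :
    ∃ a b : F, ¬(a = 0 ∧ b = 0) ∧ Ps r s a b n P = Q := by
  obtain ⟨hP2, hP1⟩ := slope_pt r s hP hPO
  obtain ⟨hQ2, hQ1⟩ := slope_pt r s hQ hQO
  obtain ⟨a, b, hab2⟩ := Am_solve r s hno hn hP1 Q.1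
  refine ⟨a, b, fun h0 => ?_, ?_⟩
  · apply hQ1
    rw [← hab2, h0.1, h0.2, Am_zero_coeffs]
  · show (Am r s a b n P.1, Am r s a b n P.2) = Q
    rw [hP2, hcomm, hab2, ← hQ2, Prod.mk.eta]

theorem gm_move_slope (hno : ∀ t : F, t ^ 2 - r * t - s ≠ 0) {m : F × F} (hm : m.2 ≠ 0)
    {P Q : (F × F) × (F × F)} (hP : P ∈ slopeLine r s m 0) (hQ : Q ∈ slopeLine r s m 0)
    (hPO : P ≠ ((0, 0), (0, 0))) (hQO : Q ≠ ((0, 0), (0, 0))) :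
    ∃ a b : F, ¬(a = 0 ∧ b = 0) ∧ gm r s a b P = Q := by
  obtain ⟨hP2, hP1⟩ := slope_pt r s hP hPO
  obtain ⟨hQ2, hQ1⟩ := slope_pt r s hQ hQO
  obtain ⟨a, b, hab2⟩ := Am_solve r s hno hm hP1 Q.1
  refine ⟨a, b, fun h0 => ?_, ?_⟩
  · apply hQ1
    rw [← hab2, h0.1, h0.2, Am_zero_coeffs]
  · have := gm_pt r s a b hm P.1
    rw [← hP2, Prod.mk.eta] at this
    rw [this, hab2, ← hQ2, Prod.mk.eta]

/-! ### the transitivity statement for a pair of origin lines -/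

theorem transOn_pair (hno : ∀ t : F, t ^ 2 - r * t - s ≠ 0)
    {A B : Set ((F × F) × (F × F))}
    (hA : A = vertLine 0 ∨ ∃ mA : F × F, A = slopeLine r s mA 0)
    (hB : B = vertLine 0 ∨ ∃ mB : F × F, B = slopeLine r s mB 0)
    {P Q : (F × F) × (F × F)} (hPA : P ∈ A) (hQA : Q ∈ A)
    (hPO : P ≠ ((0, 0), (0, 0))) (hQO : Q ≠ ((0, 0), (0, 0))) :
    ∃ ψ, IsCollineation r s ψ ∧ ψ ((0, 0), (0, 0)) = ((0, 0), (0, 0)) ∧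
      ψ '' A = A ∧ ψ '' B = B ∧ ψ P = Q := by
  have h01 : (((0 : F), (1 : F)) : F × F).2 ≠ 0 := one_ne_zero
  rcases hA with rfl | ⟨mA, rfl⟩
  · -- A is the vertical axis
    have key : ∀ n : F × F, n.2 ≠ 0 →
        (∀ a b : F, ¬(a = 0 ∧ b = 0) → Ps r s a b n '' B = B) →
        ∃ ψ, IsCollineation r s ψ ∧ ψ ((0, 0), (0, 0)) = ((0, 0), (0, 0)) ∧
          ψ '' vertLine 0 = vertLine 0 ∧ ψ '' B = B ∧ ψ P = Q := by
      intro n hn hfix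
      obtain ⟨a, b, hab, hmove⟩ := diag_move_vert r s hno hn hPA hQA hPO hQO
      exact ⟨Ps r s a b n, Ps_coll r s hno hn hab, Ps_origin r s a b n,
        Ps_fix_vert0 r s hno hn hab, hfix a b hab, hmove⟩
    rcases hB with rfl | ⟨mB, rfl⟩
    · exact key ((0 : F), (1 : F)) h01 fun a b hab => Ps_fix_vert0 r s hno h01 hab
    · by_cases hmB : mB.2 = 0
      · exact key ((0 : F), (1 : F)) h01 fun a b hab =>
          Ps_fix_slope_scalar r s hno h01 hab hmB
      · exact key mB hmB fun a b hab => Ps_fix_slope_self r s hno hmB hab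
  · -- A is a line of the form `slopeLine mA 0`
    by_cases hmA : mA.2 = 0
    · -- A of type 1 : use the diagonal family
      have key : ∀ n : F × F, n.2 ≠ 0 →
          (∀ a b : F, ¬(a = 0 ∧ b = 0) → Ps r s a b n '' B = B) →
          ∃ ψ, IsCollineation r s ψ ∧ ψ ((0, 0), (0, 0)) = ((0, 0), (0, 0)) ∧
            ψ '' slopeLine r s mA 0 = slopeLine r s mA 0 ∧ ψ '' B = B ∧ ψ P = Q := by
        intro n hn hfix
        obtain ⟨a, b, hab, hmove⟩ := diag_move_slope r s hno hn
          (fun a b x => Am_comm_scalar r s a b hmA n x) hPA hQA hPO hQO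
        exact ⟨Ps r s a b n, Ps_coll r s hno hn hab, Ps_origin r s a b n,
          Ps_fix_slope_scalar r s hno hn hab hmA, hfix a b hab, hmove⟩
      rcases hB with rfl | ⟨mB, rfl⟩
      · exact key ((0 : F), (1 : F)) h01 fun a b hab => Ps_fix_vert0 r s hno h01 hab
      · by_cases hmB : mB.2 = 0
        · exact key ((0 : F), (1 : F)) h01 fun a b hab =>
            Ps_fix_slope_scalar r s hno h01 hab hmB
        · exact key mB hmB fun a b hab => Ps_fix_slope_self r s hno hmB hab
    · -- A of type 2
      rcases hB with rfl | ⟨mB, rfl⟩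
      · -- B vertical : diagonal family with n = mA
        obtain ⟨a, b, hab, hmove⟩ := diag_move_slope r s hno hmA
          (fun a b x => Am_comm_self r s a b mA x) hPA hQA hPO hQO
        exact ⟨Ps r s a b mA, Ps_coll r s hno hmA hab, Ps_origin r s a b mA,
          Ps_fix_slope_self r s hno hmA hab, Ps_fix_vert0 r s hno hmA hab, hmove⟩
      · by_cases hmB : mB.2 = 0
        · -- B of type 1 : diagonal family with n = mA
          obtain ⟨a, b, hab, hmove⟩ := diag_move_slope r s hno hmA
            (fun a b x => Am_comm_self r s a b mA x) hPA hQA hPO hQO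
          exact ⟨Ps r s a b mA, Ps_coll r s hno hmA hab, Ps_origin r s a b mA,
            Ps_fix_slope_self r s hno hmA hab,
            Ps_fix_slope_scalar r s hno hmA hab hmB, hmove⟩
        · -- both of type 2 : use the `gm` family
          obtain ⟨a, b, hab, hmove⟩ := gm_move_slope r s hno hmA hPA hQA hPO hQO
          exact ⟨gm r s a b, gm_coll r s hno hab, gm_origin r s a b,
            gm_slope2_zero r s a b hmA hno hab, gm_slope2_zero r s a b hmB hno hab, hmove⟩


theorem coll_comp {f g : (F × F) × (F × F) → (F × F) × (F × F)}
    (hf : IsCollineation r s f) (hg : IsCollineation r s g) :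
    IsCollineation r s (f ∘ g) :=
  ⟨hf.1.comp hg.1, fun ℓ hℓ => by rw [Set.image_comp]; exact hf.2 _ (hg.2 _ hℓ)⟩

end HallAux

open HallAux in
theorem main_result {F : Type*} [Field F] [Fintype F] [DecidableEq F]
    (q : ℕ) (hq : Fintype.card F = q) (r s : F)
    (hirr : Irreducible (X ^ 2 - C r * X - C s : F[X]))
    (ℓ1' ℓ2' : Set ((F × F) × (F × F)))
    (h1 : IsHallLine r s ℓ1') (h2 : IsHallLine r s ℓ2') (hne : ℓ1' ≠ ℓ2')
    (hmeet : (ℓ1' ∩ ℓ2').Nonempty) :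
    ∃ φ, IsCollineation r s φ ∧
      (ℓ1' ∈ BFlines r s → φ '' ℓ1' = vertLine ((0 : F × F))) ∧
      (ℓ1' ∈ NBFlines r s → φ '' ℓ1' = slopeLine r s (0, 1) 0) ∧
      (((0, 0), (0, 0)) : (F × F) × (F × F)) ∈ φ '' ℓ1' ∧
      (((0, 0), (0, 0)) : (F × F) × (F × F)) ∈ φ '' ℓ2' ∧
      (∀ P Q : (F × F) × (F × F), P ∈ φ '' ℓ1' → Q ∈ φ '' ℓ1' →
        P ≠ ((0, 0), (0, 0)) → Q ≠ ((0, 0), (0, 0)) →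
        ∃ ψ, IsCollineation r s ψ ∧ ψ ((0, 0), (0, 0)) = ((0, 0), (0, 0)) ∧
          ψ '' (φ '' ℓ1') = φ '' ℓ1' ∧ ψ '' (φ '' ℓ2') = φ '' ℓ2' ∧ ψ P = Q) ∧
      (∀ P Q : (F × F) × (F × F), P ∈ φ '' ℓ2' → Q ∈ φ '' ℓ2' →
        P ≠ ((0, 0), (0, 0)) → Q ≠ ((0, 0), (0, 0)) →
        ∃ ψ, IsCollineation r s ψ ∧ ψ ((0, 0), (0, 0)) = ((0, 0), (0, 0)) ∧
          ψ '' (φ '' ℓ1') = φ '' ℓ1' ∧ ψ '' (φ '' ℓ2') = φ '' ℓ2' ∧ ψ P = Q) := by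
  have hno := noroot_of_irr r s hirr
  obtain ⟨p0, hp01, hp02⟩ := hmeet
  rcases h1 with ⟨c1, rfl⟩ | ⟨m1, k1, rfl⟩
  · -- ℓ1' is a vertical line; ℓ2' cannot be vertical
    rcases h2 with ⟨c2, rfl⟩ | ⟨m2, k2, rfl⟩
    · exact absurd (congrArg vertLine ((show p0.1 = c1 from hp01).symm.trans hp02)) hne
    · refine ⟨tr (-p0.1, -p0.2), tr_coll r s _, ?_⟩
      have im1 : tr (-p0.1, -p0.2) '' vertLine c1 = vertLine (0 : F × F) :=
        tr_vert_zero hp01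
      have im2 : tr (-p0.1, -p0.2) '' slopeLine r s m2 k2 = slopeLine r s m2 0 :=
        tr_slope_zero r s hp02
      have hO : tr (-p0.1, -p0.2) p0 = ((0, 0), (0, 0)) := tr_origin p0
      refine ⟨fun _ => im1, ?_, ⟨p0, hp01, hO⟩, ⟨p0, hp02, hO⟩, ?_, ?_⟩
      · rintro ⟨m, k, hm, heq⟩
        exact absurd heq (vert_ne_slope r s c1 m k)
      · rw [im1, im2]
        intro P Q hP hQ hPO hQO
        exact transOn_pair r s hno (Or.inl rfl) (Or.inr ⟨m2, rfl⟩) hP hQ hPO hQO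
      · rw [im1, im2]
        intro P Q hP hQ hPO hQO
        obtain ⟨ψ, u1, u2, u3, u4, u5⟩ :=
          transOn_pair r s hno (Or.inr ⟨m2, rfl⟩) (Or.inl rfl) hP hQ hPO hQO
        exact ⟨ψ, u1, u2, u4, u3, u5⟩
  · by_cases hm1 : m1.2 = 0
    · -- ℓ1' is a type 1 line
      have hab1 : ¬((-m1.1 : F) = 0 ∧ (1 : F) = 0) := fun h => one_ne_zero h.2
      refine ⟨gm r s (-m1.1) 1 ∘ tr (-p0.1, -p0.2),
        coll_comp r s (gm_coll r s hno hab1) (tr_coll r s _), ?_⟩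
      have φcoll := coll_comp r s (gm_coll r s hno hab1) (tr_coll r s (-p0.1, -p0.2))
      have im1 : (gm r s (-m1.1) 1 ∘ tr (-p0.1, -p0.2)) '' slopeLine r s m1 k1
          = vertLine (0 : F × F) := by
        rw [Set.image_comp, tr_slope_zero r s hp01, gm_kill r s hno hm1]
      have hO : (gm r s (-m1.1) 1 ∘ tr (-p0.1, -p0.2)) p0 = ((0, 0), (0, 0)) := by
        show gm r s (-m1.1) 1 (tr (-p0.1, -p0.2) p0) = _
        rw [tr_origin]
        exact gm_origin r s _ _
      have hO2 : (((0, 0), (0, 0)) : (F × F) × (F × F))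
          ∈ (gm r s (-m1.1) 1 ∘ tr (-p0.1, -p0.2)) '' ℓ2' := ⟨p0, hp02, hO⟩
      have hB := origin_line r s (φcoll.2 _ h2) hO2
      refine ⟨fun _ => im1, ?_, ⟨p0, hp01, hO⟩, hO2, ?_, ?_⟩
      · rintro ⟨m, k, hm, heq⟩
        exact absurd heq (slope1_ne_slope2 r s hm1 hm k1 k)
      · rw [im1]
        intro P Q hP hQ hPO hQO
        exact transOn_pair r s hno (Or.inl rfl) hB hP hQ hPO hQO
      · rw [im1]
        intro P Q hP hQ hPO hQO
        obtain ⟨ψ, u1, u2, u3, u4, u5⟩ :=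
          transOn_pair r s hno hB (Or.inl rfl) hP hQ hPO hQO
        exact ⟨ψ, u1, u2, u4, u3, u5⟩
    · -- ℓ1' is a type 2 line
      have he := Pm_det (F := F) hm1
      refine ⟨PsM 1 (-(m1.1 / m1.2)) 0 m1.2⁻¹ ∘ tr (-p0.1, -p0.2),
        coll_comp r s (PsM_coll r s hno he) (tr_coll r s _), ?_⟩
      have φcoll := coll_comp r s (PsM_coll r s hno he) (tr_coll r s (-p0.1, -p0.2))
      have im1 : (PsM 1 (-(m1.1 / m1.2)) 0 m1.2⁻¹ ∘ tr (-p0.1, -p0.2)) ''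
          slopeLine r s m1 k1 = slopeLine r s ((0 : F), (1 : F)) 0 := by
        rw [Set.image_comp, tr_slope_zero r s hp01, PsM_norm r s hno hm1]
      have hO : (PsM 1 (-(m1.1 / m1.2)) 0 m1.2⁻¹ ∘ tr (-p0.1, -p0.2)) p0
          = ((0, 0), (0, 0)) := by
        show PsM 1 (-(m1.1 / m1.2)) 0 m1.2⁻¹ (tr (-p0.1, -p0.2) p0) = _
        rw [tr_origin]
        exact PsM_origin _ _ _ _
      have hO2 : (((0, 0), (0, 0)) : (F × F) × (F × F))
          ∈ (PsM 1 (-(m1.1 / m1.2)) 0 m1.2⁻¹ ∘ tr (-p0.1, -p0.2)) '' ℓ2' :=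
        ⟨p0, hp02, hO⟩
      have hB := origin_line r s (φcoll.2 _ h2) hO2
      refine ⟨?_, fun _ => im1, ⟨p0, hp01, hO⟩, hO2, ?_, ?_⟩
      · rintro (⟨c, heq⟩ | ⟨m, k, hm, heq⟩)
        · exact absurd heq.symm (vert_ne_slope r s c m1 k1)
        · exact absurd heq.symm (slope1_ne_slope2 r s hm hm1 k k1)
      · rw [im1]
        intro P Q hP hQ hPO hQO
        exact transOn_pair r s hno (Or.inr ⟨((0 : F), (1 : F)), rfl⟩) hB hP hQ hPO hQO
      · rw [im1]
        intro P Q hP hQ hPO hQO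
        obtain ⟨ψ, u1, u2, u3, u4, u5⟩ :=
          transOn_pair r s hno hB (Or.inr ⟨((0 : F), (1 : F)), rfl⟩) hP hQ hPO hQO
        exact ⟨ψ, u1, u2, u4, u3, u5⟩


/-- Any ordered pair of distinct intersecting lines can be mapped by a collineation so that
the first becomes `x = (0,0)` (if it is a BF line) or `y = x·(0,1)` (if it is an NBF line);
the images meet at the origin, and there are collineations fixing the origin and both image
lines acting transitively on the nonzero points of the first image line, and likewise on
the nonzero points of the second image line. -/
theorem intersecting_pair_normalization {F : Type*} [Field F] [Fintype F] [DecidableEq F]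
    (q : ℕ) (hq : Fintype.card F = q) (r s : F)
    (hirr : Irreducible (X ^ 2 - C r * X - C s : F[X]))
    (ℓ1' ℓ2' : Set ((F × F) × (F × F)))
    (h1 : IsHallLine r s ℓ1') (h2 : IsHallLine r s ℓ2') (hne : ℓ1' ≠ ℓ2')
    (hmeet : (ℓ1' ∩ ℓ2').Nonempty) :
    ∃ φ, IsCollineation r s φ ∧
      (ℓ1' ∈ BFlines r s → φ '' ℓ1' = vertLine ((0 : F × F))) ∧
      (ℓ1' ∈ NBFlines r s → φ '' ℓ1' = slopeLine r s (0, 1) 0) ∧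
      (((0, 0), (0, 0)) : (F × F) × (F × F)) ∈ φ '' ℓ1' ∧
      (((0, 0), (0, 0)) : (F × F) × (F × F)) ∈ φ '' ℓ2' ∧
      (∀ P Q : (F × F) × (F × F), P ∈ φ '' ℓ1' → Q ∈ φ '' ℓ1' →
        P ≠ ((0, 0), (0, 0)) → Q ≠ ((0, 0), (0, 0)) →
        ∃ ψ, IsCollineation r s ψ ∧ ψ ((0, 0), (0, 0)) = ((0, 0), (0, 0)) ∧
          ψ '' (φ '' ℓ1') = φ '' ℓ1' ∧ ψ '' (φ '' ℓ2') = φ '' ℓ2' ∧ ψ P = Q) ∧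
      (∀ P Q : (F × F) × (F × F), P ∈ φ '' ℓ2' → Q ∈ φ '' ℓ2' →
        P ≠ ((0, 0), (0, 0)) → Q ≠ ((0, 0), (0, 0)) →
        ∃ ψ, IsCollineation r s ψ ∧ ψ ((0, 0), (0, 0)) = ((0, 0), (0, 0)) ∧
          ψ '' (φ '' ℓ1') = φ '' ℓ1' ∧ ψ '' (φ '' ℓ2') = φ '' ℓ2' ∧ ψ P = Q) :=
  main_result q hq r s hirr ℓ1' ℓ2' h1 h2 hne hmeet
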